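/- If P is a real-linear endomorphism of a complex normed space (V, J) with J an isometric complex structure, and ‖P - id‖ < 1/2 in operator norm, then the complex-linear part P^J = (1/2)(P - J ∘ P ∘ J) of P is a linear isomorphism. -/
import Mathlib


/-- If `P` is a bounded real-linear endomorphism of a complex Banach space `(V, J)` with `J`
an isometric complex structure and `‖P - id‖ < 1/2`, then the complex-linear part
`Pᴶ = (1/2)(P - J ∘ P ∘ J)` of `P` is a (continuous linear) isomorphism. -/
theorem stmt_1 (V : Type*) [NormedAddCommGroup V] [NormedSpace ℝ V] [CompleteSpace V]
    (J P : V →L[ℝ] V)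
    (hJ2 : J.comp J = -ContinuousLinearMap.id ℝ V)
    (hJiso : ∀ v : V, ‖J v‖ = ‖v‖)
    (hP : ‖P - ContinuousLinearMap.id ℝ V‖ < 1 / 2) :
    ∃ e : V ≃L[ℝ] V, (e : V →L[ℝ] V) = (1 / 2 : ℝ) • (P - J.comp (P.comp J)) := by
  set Q : V →L[ℝ] V := (1 / 2 : ℝ) • (P - J.comp (P.comp J)) with hQ
  set A : V →L[ℝ] V := P - ContinuousLinearMap.id ℝ V with hA
  have hJAJ : ‖J.comp (A.comp J)‖ ≤ ‖A‖ := by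
    apply ContinuousLinearMap.opNorm_le_bound _ (norm_nonneg A)
    intro v
    simp only [ContinuousLinearMap.comp_apply]
    rw [hJiso]
    calc ‖A (J v)‖ ≤ ‖A‖ * ‖J v‖ := A.le_opNorm _
    _ = ‖A‖ * ‖v‖ := by rw [hJiso]
  have hQ1 : Q - 1 = (1 / 2 : ℝ) • (A - J.comp (A.comp J)) := by
    have : J.comp (P.comp J) = J.comp (A.comp J) - 1 := by
      rw [hA]
      ext v
      simp only [ContinuousLinearMap.comp_apply, ContinuousLinearMap.sub_apply,
        ContinuousLinearMap.one_apply, ContinuousLinearMap.id_apply, map_sub]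
      have : J (J v) = -v := by
        have := congrArg (fun f => f v) hJ2
        simpa using this
      rw [this]; abel
    rw [hQ, this]
    ext v
    simp only [ContinuousLinearMap.smul_apply, ContinuousLinearMap.sub_apply,
      ContinuousLinearMap.one_apply, hA, ContinuousLinearMap.comp_apply,
      ContinuousLinearMap.id_apply, map_sub, smul_sub]
    module
  have hnorm : ‖1 - Q‖ < 1 := by
    have h1 : ‖Q - 1‖ ≤ ‖A‖ := by
      rw [hQ1]
      have h2 : ‖A - J.comp (A.comp J)‖ ≤ ‖A‖ + ‖A‖ :=
        le_trans (norm_sub_le _ _) (by linarith)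
      calc ‖(1 / 2 : ℝ) • (A - J.comp (A.comp J))‖
          ≤ ‖(1 / 2 : ℝ)‖ * ‖A - J.comp (A.comp J)‖ :=
            ContinuousLinearMap.opNorm_smul_le _ _
      _ ≤ (1/2) * (‖A‖ + ‖A‖) := by
            have h3 : ‖(1/2:ℝ)‖ = 1/2 := by
              rw [Real.norm_eq_abs, abs_of_pos]; norm_num
            rw [h3]
            exact mul_le_mul_of_nonneg_left h2 (by norm_num)
      _ = ‖A‖ := by ring
    rw [← norm_neg, neg_sub]
    calc ‖Q - 1‖ ≤ ‖A‖ := h1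
    _ < 1 := by rw [hA]; linarith
  refine ⟨ContinuousLinearEquiv.ofUnit (Units.oneSub (1 - Q) hnorm), ?_⟩
  have h4 : ((ContinuousLinearEquiv.ofUnit (Units.oneSub (1 - Q) hnorm)) : V →L[ℝ] V)
      = ((Units.oneSub (1 - Q) hnorm : (V →L[ℝ] V)ˣ) : V →L[ℝ] V) := rfl
  rw [h4]
  show (1 : V →L[ℝ] V) - (1 - Q) = _
  rw [hQ]
  abel
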